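/- Let H₁, H₂ be separable Hilbert spaces, (μⱼ, eⱼ) the eigenpairs of a positive semidefinite injective trace class operator C on H₁ with all μⱼ > 0, and Γ ∈ L₂(H₁,H₂) a Hilbert–Schmidt operator. Let μ be a centered Gaussian measure on H₁ with covariance C. Then the series Σⱼ μⱼ^{−1/2} ⟨x, eⱼ⟩ Γeⱼ converges in L²((H₁,μ), H₂), defining a measurable map ΓC^{−1/2}, and ∫_{H₁} ‖ΓC^{−1/2}x‖²_{H₂} dμ(x) = ‖Γ‖²_{L₂(H₁,H₂)}. -/

import Mathlib

open MeasureTheory ProbabilityTheory Filter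
open scoped RealInnerProductSpace

private lemma int_norm_sq_eq {α H : Type*} {m : MeasurableSpace α} {μ : Measure α}
    [NormedAddCommGroup H] [InnerProductSpace ℝ H] (F : Lp H 2 μ) :
    ∫ x, ‖F x‖ ^ 2 ∂μ = ‖F‖ ^ 2 := by
  have h : ⟪F, F⟫ = ∫ x, ⟪F x, F x⟫ ∂μ := L2.inner_def F F
  rw [real_inner_self_eq_norm_sq] at h
  rw [h]
  exact integral_congr_ae (Eventually.of_forall fun x => (real_inner_self_eq_norm_sq _).symm)

/-- Lemma 2.2 of Galmarino–Maslowski type: for a centered Gaussian measure `μ` on `H₁`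
with injective trace class covariance `C` (eigenpairs `(μⱼ, eⱼ)`, `μⱼ > 0`) and a
Hilbert–Schmidt operator `Γ : H₁ → H₂`, the series `Σⱼ μⱼ^{-1/2} ⟨x, eⱼ⟩ Γ eⱼ`
converges in `L²((H₁,μ), H₂)` to a map `g = Γ C^{-1/2}` with
`∫ ‖g x‖² dμ(x) = ‖Γ‖²_{L₂(H₁,H₂)} = Σⱼ ‖Γ eⱼ‖²`. -/
theorem stmt_17
    {H₁ H₂ : Type*}
    [NormedAddCommGroup H₁] [InnerProductSpace ℝ H₁] [CompleteSpace H₁]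
    [MeasurableSpace H₁] [BorelSpace H₁]
    [NormedAddCommGroup H₂] [InnerProductSpace ℝ H₂] [CompleteSpace H₂]
    (e : HilbertBasis ℕ ℝ H₁) (muj : ℕ → ℝ) (hmu : ∀ j, 0 < muj j)
    (C : H₁ →L[ℝ] H₁) (hCe : ∀ j, C (e j) = muj j • e j) (hCtr : Summable muj)
    (Γ : H₁ →L[ℝ] H₂) (hΓ : Summable fun j => ‖Γ (e j)‖ ^ 2)
    (μ : Measure H₁) [IsProbabilityMeasure μ]
    (hgauss : ∀ j, Measure.map (fun x => ⟪x, e j⟫) μ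
      = gaussianReal 0 (Real.toNNReal (muj j)))
    (hcov : ∀ u v : H₁, ∫ x, ⟪x, u⟫ * ⟪x, v⟫ ∂μ = ⟪C u, v⟫) :
    ∃ g : H₁ → H₂, MemLp g 2 μ ∧
      Tendsto
        (fun N => ∫ x,
          ‖(∑ j ∈ Finset.range N, ((Real.sqrt (muj j))⁻¹ * ⟪x, e j⟫) • Γ (e j)) - g x‖ ^ 2 ∂μ)
        atTop (nhds 0) ∧
      ∫ x, ‖g x‖ ^ 2 ∂μ = ∑' j, ‖Γ (e j)‖ ^ 2 := by
  classical
  set c : ℕ → ℝ := fun j => (Real.sqrt (muj j))⁻¹ with hc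
  set φ : ℕ → H₁ → H₂ := fun j x => (c j * ⟪x, e j⟫) • Γ (e j) with hφ
  have hecont : ∀ v : H₁, Continuous fun x : H₁ => ⟪x, v⟫ := fun v =>
    continuous_id.inner continuous_const
  have hee : ∀ i j, ⟪e i, e j⟫ = if i = j then 1 else 0 := fun i j =>
    orthonormal_iff_ite.mp e.orthonormal i j
  have hcov' : ∀ i j, ∫ x, ⟪x, e i⟫ * ⟪x, e j⟫ ∂μ = if i = j then muj i else 0 := by
    intro i j
    rw [hcov, hCe, real_inner_smul_left, hee i j]
    simp
  have hmem : ∀ j, MemLp (fun x => ⟪x, e j⟫) 2 μ := by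
    intro j
    have hmeas := (hecont (e j)).aestronglyMeasurable (μ := μ)
    rw [memLp_two_iff_integrable_sq hmeas]
    by_contra hint
    have h0 : ¬ Integrable (fun x => ⟪x, e j⟫ * ⟪x, e j⟫) μ := by
      simpa [sq] using hint
    have := hcov' j j
    rw [integral_undef h0] at this
    simp at this
    exact absurd this.symm (hmu j).ne'
  have hprod : ∀ i j, Integrable (fun x => ⟪x, e i⟫ * ⟪x, e j⟫) μ := by
    intro i j
    have h := L2.integrable_inner (𝕜 := ℝ) ((hmem i).toLp _) ((hmem j).toLp _)
    refine h.congr ?_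
    filter_upwards [(hmem i).coeFn_toLp, (hmem j).coeFn_toLp] with x h1 h2
    simp [h1, h2, RCLike.inner_apply, mul_comm]
  have hφmem : ∀ j, MemLp (φ j) 2 μ := by
    intro j
    have h1 : MemLp (fun x => c j * ⟪x, e j⟫) 2 μ := (hmem j).const_mul _
    have := (ContinuousLinearMap.toSpanSingleton ℝ (Γ (e j))).comp_memLp' h1
    simpa [Function.comp_def, ContinuousLinearMap.toSpanSingleton_apply, hφ] using this
  have hI : ∀ i j, ∫ x, (c i * ⟪x, e i⟫) * (c j * ⟪x, e j⟫) ∂μ = if i = j then 1 else 0 := by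
    intro i j
    have hre : (fun x => (c i * ⟪x, e i⟫) * (c j * ⟪x, e j⟫))
        = fun x => (c i * c j) * (⟪x, e i⟫ * ⟪x, e j⟫) := by
      funext x; ring
    rw [hre, integral_const_mul, hcov']
    by_cases h : i = j
    · subst h
      have hs : Real.sqrt (muj i) ≠ 0 := Real.sqrt_ne_zero'.mpr (hmu i)
      simp only [if_pos rfl, hc]
      field_simp
      simp [Real.sq_sqrt (hmu i).le]
    · simp [h]
  have hterm : ∀ i j, Integrable
      (fun x => ((c i * ⟪x, e i⟫) * (c j * ⟪x, e j⟫)) * ⟪Γ (e i), Γ (e j)⟫) μ := by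
    intro i j
    have := ((hprod i j).const_mul (c i * c j)).mul_const ⟪Γ (e i), Γ (e j)⟫
    exact this.congr (Eventually.of_forall fun x => by ring)
  have hkey : ∀ s : Finset ℕ, ∫ x, ‖∑ j ∈ s, φ j x‖ ^ 2 ∂μ = ∑ j ∈ s, ‖Γ (e j)‖ ^ 2 := by
    intro s
    have hpt : ∀ x, ‖∑ j ∈ s, φ j x‖ ^ 2
        = ∑ i ∈ s, ∑ j ∈ s, ((c i * ⟪x, e i⟫) * (c j * ⟪x, e j⟫)) * ⟪Γ (e i), Γ (e j)⟫ := by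
      intro x
      rw [← real_inner_self_eq_norm_sq, sum_inner]
      refine Finset.sum_congr rfl fun i _ => ?_
      rw [inner_sum]
      refine Finset.sum_congr rfl fun j _ => ?_
      rw [hφ]
      simp only [real_inner_smul_left, real_inner_smul_right]
      ring
    simp_rw [hpt]
    rw [integral_finset_sum s (fun i _ => integrable_finset_sum s (fun j _ => hterm i j))]
    refine Finset.sum_congr rfl fun i hi => ?_
    rw [integral_finset_sum s (fun j _ => hterm i j)]
    have hterm' : ∀ j ∈ s, ∫ x, ((c i * ⟪x, e i⟫) * (c j * ⟪x, e j⟫)) * ⟪Γ (e i), Γ (e j)⟫ ∂μ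
        = (if i = j then 1 else 0) * ⟪Γ (e i), Γ (e j)⟫ := fun j _ => by
      rw [integral_mul_const, hI]
    rw [Finset.sum_congr rfl hterm']
    simp only [ite_mul, one_mul, zero_mul]
    rw [Finset.sum_ite_eq s i (fun j => ⟪Γ (e i), Γ (e j)⟫)]
    simp [hi, real_inner_self_eq_norm_sq]
  have hψmem : ∀ N : ℕ, MemLp (fun x => ∑ j ∈ Finset.range N, φ j x) 2 μ := fun N =>
    memLp_finset_sum _ (fun j _ => hφmem j)
  set S : ℕ → Lp H₂ 2 μ := fun N => (hψmem N).toLp _ with hS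
  have hnorm_sq : ∀ {f : H₁ → H₂} (hf : MemLp f 2 μ),
      ‖hf.toLp f‖ ^ 2 = ∫ x, ‖f x‖ ^ 2 ∂μ := by
    intro f hf
    rw [← int_norm_sq_eq (hf.toLp f)]
    exact integral_congr_ae (hf.coeFn_toLp.mono fun x hx => by simp [hx])
  have hSdiff : ∀ M N : ℕ, M ≤ N →
      ‖S N - S M‖ ^ 2 = ∑ j ∈ Finset.Ico M N, ‖Γ (e j)‖ ^ 2 := by
    intro M N h
    have hd : MemLp (fun x => ∑ j ∈ Finset.Ico M N, φ j x) 2 μ :=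
      memLp_finset_sum _ (fun j _ => hφmem j)
    have heq : S N - S M = hd.toLp _ := by
      rw [hS]
      dsimp only
      rw [← MemLp.toLp_sub (hψmem N) (hψmem M)]
      congr 1
      funext x
      rw [Finset.sum_Ico_eq_sub _ h]
      simp
    rw [heq, hnorm_sq hd, hkey]
  have hcauchy : CauchySeq S := by
    rw [Metric.cauchySeq_iff']
    intro ε hε
    have ht : CauchySeq (fun N => ∑ j ∈ Finset.range N, ‖Γ (e j)‖ ^ 2) :=
      hΓ.hasSum.tendsto_sum_nat.cauchySeq
    rw [Metric.cauchySeq_iff'] at ht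
    obtain ⟨K, hK⟩ := ht (ε ^ 2) (by positivity)
    refine ⟨K, fun n hn => ?_⟩
    have h1 : dist (S n) (S K) ^ 2 = ∑ j ∈ Finset.Ico K n, ‖Γ (e j)‖ ^ 2 := by
      rw [dist_eq_norm, hSdiff K n hn]
    have h2 := hK n hn
    rw [Real.dist_eq, ← Finset.sum_Ico_eq_sub _ hn] at h2
    have h3 : |∑ j ∈ Finset.Ico K n, ‖Γ (e j)‖ ^ 2| = ∑ j ∈ Finset.Ico K n, ‖Γ (e j)‖ ^ 2 :=
      abs_of_nonneg (Finset.sum_nonneg fun j _ => by positivity)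
    rw [h3] at h2
    rw [← h1] at h2
    exact lt_of_pow_lt_pow_left₀ 2 hε.le h2
  obtain ⟨G, hG⟩ := cauchySeq_tendsto_of_complete hcauchy
  refine ⟨G, Lp.memLp G, ?_, ?_⟩
  · have heq : ∀ N, ∫ x,
        ‖(∑ j ∈ Finset.range N, ((Real.sqrt (muj j))⁻¹ * ⟪x, e j⟫) • Γ (e j)) - G x‖ ^ 2 ∂μ
        = ‖S N - G‖ ^ 2 := by
      intro N
      rw [← int_norm_sq_eq (S N - G)]
      refine integral_congr_ae ?_
      filter_upwards [Lp.coeFn_sub (S N) G, (hψmem N).coeFn_toLp] with x h1 h2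
      rw [h1]
      simp only [Pi.sub_apply]
      rw [show S N = (hψmem N).toLp _ from rfl, h2]
    simp only [heq]
    have hn : Tendsto (fun N => ‖S N - G‖) atTop (nhds 0) := by
      simpa [dist_eq_norm] using tendsto_iff_dist_tendsto_zero.mp hG
    simpa using hn.pow 2
  · rw [int_norm_sq_eq G]
    have h2 : Tendsto (fun N => ‖S N‖ ^ 2) atTop (nhds (‖G‖ ^ 2)) := (hG.norm).pow 2
    have h3 : ∀ N, ‖S N‖ ^ 2 = ∑ j ∈ Finset.range N, ‖Γ (e j)‖ ^ 2 := fun N => by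
      rw [hS]
      dsimp only
      rw [hnorm_sq (hψmem N), hkey]
    exact tendsto_nhds_unique (by simpa only [h3] using h2) hΓ.hasSum.tendsto_sum_nat
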